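/- Let a : ℕ → ℂ be a multiplicative arithmetic function satisfying condition (B). Then ∑_{p prime} |a(p)|⁴ / p² < ∞ (i.e., the function p ↦ |a(p)|⁴/p² is summable over the primes). -/

import Mathlib

theorem condB_aux_prod (a : ℕ → ℂ) (h1 : a 1 = 1)
    (hm : ∀ m n : ℕ, Nat.Coprime m n → a (m * n) = a m * a n) :
    ∀ n : ℕ, Squarefree n → a n = ∏ p ∈ n.primeFactors, a p := by
  intro n
  induction n using Nat.strong_induction_on with
  | _ n ih =>
    intro hsq
    rcases eq_or_ne n 1 with rfl | hn1
    · simpa using h1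
    · have hn0 : n ≠ 0 := hsq.ne_zero
      have hpp : n.minFac.Prime := Nat.minFac_prime hn1
      obtain ⟨m, hm'⟩ : n.minFac ∣ n := Nat.minFac_dvd n
      have hm0 : m ≠ 0 := by
        rintro rfl; exact hn0 (by simpa using hm')
      have hpm : ¬ n.minFac ∣ m := by
        intro hd
        obtain ⟨t, rfl⟩ := hd
        have : n.minFac * n.minFac ∣ n := ⟨t, hm'.trans (by ring)⟩
        exact hpp.one_lt.ne' (Nat.isUnit_iff.mp (hsq _ this))
      have hcop : Nat.Coprime n.minFac m := (Nat.Prime.coprime_iff_not_dvd hpp).mpr hpm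
      have hmlt : m < n := by
        rw [hm']
        have : 1 * m < n.minFac * m :=
          Nat.mul_lt_mul_of_lt_of_le hpp.one_lt (le_refl m) (Nat.pos_of_ne_zero hm0)
        simpa using this
      have hmsq : Squarefree m := hsq.squarefree_of_dvd ⟨n.minFac, hm'.trans (mul_comm _ _)⟩
      have hpnotmem : n.minFac ∉ m.primeFactors := fun h => hpm (Nat.dvd_of_mem_primeFactors h)
      rw [hm', hm _ _ hcop, ih m hmlt hmsq,
        Nat.primeFactors_mul (Nat.Prime.ne_zero hpp) hm0, Nat.Prime.primeFactors hpp,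
        ← Finset.insert_eq, Finset.prod_insert hpnotmem]

theorem condB_aux_pow (D : ℝ) (hD : 1 ≤ D) (n : ℕ) (hsq : Squarefree n) :
    D ^ n.primeFactors.card ≤ (n : ℝ) ^ Real.logb 2 D := by
  have hE : 0 ≤ Real.logb 2 D := Real.logb_nonneg one_lt_two hD
  have h2n : (2 : ℕ) ^ n.primeFactors.card ≤ n := by
    calc (2:ℕ) ^ n.primeFactors.card = ∏ _p ∈ n.primeFactors, 2 := by
          rw [Finset.prod_const]
      _ ≤ ∏ p ∈ n.primeFactors, p :=
          Finset.prod_le_prod' fun p hp => (Nat.prime_of_mem_primeFactors hp).two_le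
      _ = n := Nat.prod_primeFactors_of_squarefree hsq
  have hD0 : (0:ℝ) < D := lt_of_lt_of_le one_pos hD
  have key : D ^ n.primeFactors.card = ((2:ℝ) ^ n.primeFactors.card) ^ Real.logb 2 D := by
    conv_lhs => rw [← Real.rpow_logb (by norm_num : (0:ℝ) < 2) (by norm_num) hD0]
    rw [← Real.rpow_natCast ((2:ℝ) ^ Real.logb 2 D) n.primeFactors.card,
      ← Real.rpow_mul (by norm_num), mul_comm,
      Real.rpow_mul (by norm_num), Real.rpow_natCast]
  rw [key]
  apply Real.rpow_le_rpow (by positivity) _ hE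
  exact_mod_cast h2n

theorem condB_aux_prod' (a : ℕ → ℂ)
    (haux : ∀ n : ℕ, Squarefree n → a n = ∏ p ∈ n.primeFactors, a p)
    (D : ℝ) (hp : ∀ p : ℕ, p.Prime → (‖a p‖) ^ 2 ≤ D * p) :
    ∀ n : ℕ, Squarefree n → (‖a n‖) ^ 2 ≤ D ^ n.primeFactors.card * n := by
  intro n hsq
  rw [haux n hsq, norm_prod, ← Finset.prod_pow]
  calc ∏ p ∈ n.primeFactors, (‖a p‖) ^ 2
      ≤ ∏ p ∈ n.primeFactors, D * p := by
        apply Finset.prod_le_prod (fun p _ => by positivity)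
        exact fun p hp' => hp p (Nat.prime_of_mem_primeFactors hp')
    _ = D ^ n.primeFactors.card * n := by
        rw [Finset.prod_mul_distrib, Finset.prod_const, ← Nat.cast_prod,
          Nat.prod_primeFactors_of_squarefree hsq]

theorem condB_T_bound (a : ℕ → ℂ)
    (D : ℝ) (hD : 1 ≤ D)
    (hterm : ∀ n : ℕ, Squarefree n →
      (‖a n‖) ^ 2 ≤ D ^ n.primeFactors.card * n)
    (hpow : ∀ n : ℕ, Squarefree n → D ^ n.primeFactors.card ≤ (n : ℝ) ^ Real.logb 2 D)
    (htD : ∀ p : ℕ, p.Prime → (‖a p‖) ^ 2 / (p : ℝ) ≤ D)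
    (C₀ : ℝ) (hC₀ : 0 < C₀)
    (hmain : ∀ m : ℕ, 2 ≤ m →
      ∏ p ∈ (Finset.Icc 1 m).filter Nat.Prime, (1 + (‖a p‖) ^ 2 / (p : ℝ))
        ≤ C₀ * ∑ n ∈ Finset.Icc 1 m,
            ((ArithmeticFunction.moebius n : ℝ)) ^ 2 * (‖a n‖) ^ 2 / (n : ℝ)) :
    ∀ m : ℕ, 2 ≤ m →
      ∑ p ∈ (Finset.Icc 1 m).filter Nat.Prime, (‖a p‖) ^ 2 / (p : ℝ)
        ≤ (1 + D) * (Real.log C₀ + (1 + Real.logb 2 D) * Real.log m) := by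
  intro m hm2
  set E := Real.logb 2 D with hE
  have hE0 : 0 ≤ E := Real.logb_nonneg one_lt_two hD
  have hm0 : (0:ℝ) < m := by exact_mod_cast Nat.lt_of_lt_of_le (by norm_num) hm2
  -- Step 1: the moebius-weighted sum is at most m * m^E
  have hsum : ∑ n ∈ Finset.Icc 1 m,
      ((ArithmeticFunction.moebius n : ℝ)) ^ 2 * (‖a n‖) ^ 2 / (n : ℝ)
      ≤ (m:ℝ) * (m:ℝ) ^ E := by
    have hle : ∀ n ∈ Finset.Icc 1 m,
        ((ArithmeticFunction.moebius n : ℝ)) ^ 2 * (‖a n‖) ^ 2 / (n : ℝ)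
          ≤ (m:ℝ) ^ E := by
      intro n hn
      obtain ⟨hn1, hnm⟩ := Finset.mem_Icc.mp hn
      have hn0 : (0:ℝ) < n := by exact_mod_cast hn1
      by_cases hsq : Squarefree n
      · have hμ : ((ArithmeticFunction.moebius n : ℤ) : ℝ) ^ 2 = 1 := by
          rw [ArithmeticFunction.moebius_apply_of_squarefree hsq]
          push_cast
          rw [← pow_mul, mul_comm, pow_mul]
          norm_num
        rw [hμ, one_mul]
        calc (‖a n‖) ^ 2 / (n : ℝ)
            ≤ (D ^ n.primeFactors.card * n) / (n : ℝ) := by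
              gcongr
              exact hterm n hsq
          _ = D ^ n.primeFactors.card := by field_simp
          _ ≤ (n:ℝ) ^ E := hpow n hsq
          _ ≤ (m:ℝ) ^ E := Real.rpow_le_rpow hn0.le (by exact_mod_cast hnm) hE0
      · rw [ArithmeticFunction.moebius_eq_zero_of_not_squarefree hsq]
        simp only [Int.cast_zero, ne_eq, OfNat.ofNat_ne_zero, not_false_eq_true, zero_pow,
          zero_mul, zero_div]
        positivity
    calc ∑ n ∈ Finset.Icc 1 m,
          ((ArithmeticFunction.moebius n : ℝ)) ^ 2 * (‖a n‖) ^ 2 / (n : ℝ)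
        ≤ ∑ _n ∈ Finset.Icc 1 m, (m:ℝ) ^ E := Finset.sum_le_sum hle
      _ = (m:ℝ) * (m:ℝ) ^ E := by
          rw [Finset.sum_const, Nat.card_Icc, nsmul_eq_mul]
          norm_num
  -- Step 2: log comparison
  have hfac : ∀ p ∈ (Finset.Icc 1 m).filter Nat.Prime,
      (0:ℝ) < 1 + (‖a p‖) ^ 2 / (p : ℝ) := by
    intro p hp'
    have : (0:ℝ) ≤ (‖a p‖) ^ 2 / (p : ℝ) := by positivity
    linarith
  have hPpos : 0 < ∏ p ∈ (Finset.Icc 1 m).filter Nat.Prime,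
      (1 + (‖a p‖) ^ 2 / (p : ℝ)) := Finset.prod_pos hfac
  have hPle : ∏ p ∈ (Finset.Icc 1 m).filter Nat.Prime,
      (1 + (‖a p‖) ^ 2 / (p : ℝ)) ≤ C₀ * ((m:ℝ) * (m:ℝ) ^ E) :=
    (hmain m hm2).trans (mul_le_mul_of_nonneg_left hsum hC₀.le)
  have hlogle : Real.log (∏ p ∈ (Finset.Icc 1 m).filter Nat.Prime,
      (1 + (‖a p‖) ^ 2 / (p : ℝ))) ≤ Real.log C₀ + (1 + E) * Real.log m := by
    calc Real.log (∏ p ∈ (Finset.Icc 1 m).filter Nat.Prime,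
          (1 + (‖a p‖) ^ 2 / (p : ℝ)))
        ≤ Real.log (C₀ * ((m:ℝ) * (m:ℝ) ^ E)) := Real.log_le_log hPpos hPle
      _ = Real.log C₀ + (Real.log m + E * Real.log m) := by
          rw [Real.log_mul (ne_of_gt hC₀) (by positivity),
            Real.log_mul (ne_of_gt hm0) (by positivity), Real.log_rpow hm0]
      _ = Real.log C₀ + (1 + E) * Real.log m := by ring
  have hlogsum : Real.log (∏ p ∈ (Finset.Icc 1 m).filter Nat.Prime,
      (1 + (‖a p‖) ^ 2 / (p : ℝ)))
      = ∑ p ∈ (Finset.Icc 1 m).filter Nat.Prime,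
          Real.log (1 + (‖a p‖) ^ 2 / (p : ℝ)) :=
    Real.log_prod (fun p hp' => (hfac p hp').ne')
  have h1D : (0:ℝ) < 1 + D := by linarith
  have hper : ∀ p ∈ (Finset.Icc 1 m).filter Nat.Prime,
      (‖a p‖) ^ 2 / (p : ℝ) / (1 + D)
        ≤ Real.log (1 + (‖a p‖) ^ 2 / (p : ℝ)) := by
    intro p hp'
    have hprime : p.Prime := (Finset.mem_filter.mp hp').2
    have ht0 : (0:ℝ) ≤ (‖a p‖) ^ 2 / (p : ℝ) := by positivity
    have htD' := htD p hprime
    have h1t : (0:ℝ) < 1 + (‖a p‖) ^ 2 / (p : ℝ) := by linarith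
    have hlog := Real.one_sub_inv_le_log_of_pos h1t
    have heq : 1 - (1 + (‖a p‖) ^ 2 / (p : ℝ))⁻¹
        = (‖a p‖) ^ 2 / (p : ℝ) / (1 + (‖a p‖) ^ 2 / (p : ℝ)) := by
      field_simp
      ring
    have hmono : (‖a p‖) ^ 2 / (p : ℝ) / (1 + D)
        ≤ (‖a p‖) ^ 2 / (p : ℝ) / (1 + (‖a p‖) ^ 2 / (p : ℝ)) :=
      div_le_div_of_nonneg_left ht0 h1t (by linarith)
    linarith
  have hfinal : (∑ p ∈ (Finset.Icc 1 m).filter Nat.Prime,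
      (‖a p‖) ^ 2 / (p : ℝ)) / (1 + D)
      ≤ Real.log C₀ + (1 + E) * Real.log m := by
    rw [Finset.sum_div]
    calc ∑ p ∈ (Finset.Icc 1 m).filter Nat.Prime,
          (‖a p‖) ^ 2 / (p : ℝ) / (1 + D)
        ≤ ∑ p ∈ (Finset.Icc 1 m).filter Nat.Prime,
            Real.log (1 + (‖a p‖) ^ 2 / (p : ℝ)) := Finset.sum_le_sum hper
      _ = _ := hlogsum.symm
      _ ≤ Real.log C₀ + (1 + E) * Real.log m := hlogle
  rw [div_le_iff₀ h1D] at hfinal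
  linarith [hfinal]

noncomputable def condBg (a : ℕ → ℂ) : ℕ → ℝ :=
  fun n => if n.Prime then (‖a n‖) ^ 4 / (n : ℝ) ^ 2 else 0

theorem condBg_nonneg (a : ℕ → ℂ) (n : ℕ) : 0 ≤ condBg a n := by
  unfold condBg; split
  · positivity
  · exact le_refl 0

theorem condB_block_bound (a : ℕ → ℂ) (D θ' ρ C₀ E : ℝ)
    (hD : 1 ≤ D) (hρdef : ρ = (2:ℝ) ^ (2 * θ' - 1)) (hexp : 2 * θ' - 1 ≤ 0)
    (ht_rpow : ∀ p : ℕ, p.Prime →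
      (‖a p‖) ^ 2 / (p : ℝ) ≤ D * (p : ℝ) ^ (2 * θ' - 1))
    (TT : ∀ m : ℕ, 2 ≤ m →
      ∑ p ∈ (Finset.Icc 1 m).filter Nat.Prime, (‖a p‖) ^ 2 / (p : ℝ)
        ≤ (1 + D) * (Real.log C₀ + (1 + E) * Real.log m)) :
    ∀ k : ℕ, ∑ n ∈ Finset.Ico (2 ^ k) (2 ^ (k + 1)), condBg a n
      ≤ (D * (1 + D)) * (|Real.log C₀| + (1 + E) * Real.log 2 * (k + 1)) * ρ ^ k := by
  intro k
  have hρ0 : 0 < ρ := by rw [hρdef]; exact Real.rpow_pos_of_pos two_pos _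
  -- reduce to primes
  have hfilter : ∑ n ∈ Finset.Ico (2 ^ k) (2 ^ (k + 1)), condBg a n
      = ∑ n ∈ (Finset.Ico (2 ^ k) (2 ^ (k + 1))).filter Nat.Prime, condBg a n := by
    refine (Finset.sum_filter_of_ne ?_).symm
    intro n _ hne
    by_contra hnp
    exact hne (by simp [condBg, hnp])
  rw [hfilter]
  have hstep : ∀ n ∈ (Finset.Ico (2 ^ k) (2 ^ (k + 1))).filter Nat.Prime,
      condBg a n ≤ (D * ρ ^ k) * ((‖a n‖) ^ 2 / (n : ℝ)) := by
    intro n hn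
    obtain ⟨hmem, hprime⟩ := Finset.mem_filter.mp hn
    obtain ⟨hlo, _⟩ := Finset.mem_Ico.mp hmem
    have hn0 : (0:ℝ) < n := by exact_mod_cast hprime.pos
    have hgn : condBg a n = ((‖a n‖) ^ 2 / (n : ℝ)) ^ 2 := by
      rw [condBg, if_pos hprime, div_pow, ← pow_mul]
    have ht0 : (0:ℝ) ≤ (‖a n‖) ^ 2 / (n : ℝ) := by positivity
    have hrpowle : (n : ℝ) ^ (2 * θ' - 1) ≤ ρ ^ k := by
      have h2k : (0:ℝ) < (2:ℝ) ^ (k : ℕ) := by positivity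
      have hle : ((2:ℝ) ^ (k : ℕ)) ≤ (n : ℝ) := by exact_mod_cast hlo
      have h1 : (n : ℝ) ^ (2 * θ' - 1) ≤ ((2:ℝ) ^ (k : ℕ)) ^ (2 * θ' - 1) :=
        Real.rpow_le_rpow_of_nonpos h2k hle hexp
      have h2 : ((2:ℝ) ^ (k : ℕ)) ^ (2 * θ' - 1) = ρ ^ k := by
        rw [hρdef, ← Real.rpow_natCast 2 k, ← Real.rpow_mul (by norm_num),
          ← Real.rpow_natCast ((2:ℝ) ^ (2 * θ' - 1)) k, ← Real.rpow_mul (by norm_num),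
          mul_comm]
      linarith
    calc condBg a n = ((‖a n‖) ^ 2 / (n : ℝ)) * ((‖a n‖) ^ 2 / (n : ℝ)) := by
          rw [hgn]; ring
      _ ≤ (D * (n : ℝ) ^ (2 * θ' - 1)) * ((‖a n‖) ^ 2 / (n : ℝ)) :=
          mul_le_mul_of_nonneg_right (ht_rpow n hprime) ht0
      _ ≤ (D * ρ ^ k) * ((‖a n‖) ^ 2 / (n : ℝ)) := by
          apply mul_le_mul_of_nonneg_right _ ht0
          apply mul_le_mul_of_nonneg_left hrpowle (by linarith)
  have hsubset : (Finset.Ico (2 ^ k) (2 ^ (k + 1))).filter Nat.Prime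
      ⊆ (Finset.Icc 1 (2 ^ (k + 1))).filter Nat.Prime := by
    apply Finset.filter_subset_filter
    intro n hn
    obtain ⟨hlo, hhi⟩ := Finset.mem_Ico.mp hn
    exact Finset.mem_Icc.mpr ⟨le_trans Nat.one_le_two_pow hlo, le_of_lt hhi⟩
  have hTsub : ∑ n ∈ (Finset.Ico (2 ^ k) (2 ^ (k + 1))).filter Nat.Prime,
      (‖a n‖) ^ 2 / (n : ℝ)
      ≤ ∑ p ∈ (Finset.Icc 1 (2 ^ (k + 1))).filter Nat.Prime,
          (‖a p‖) ^ 2 / (p : ℝ) :=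
    Finset.sum_le_sum_of_subset_of_nonneg hsubset (fun i _ _ => by positivity)
  have h2m : 2 ≤ 2 ^ (k + 1) := by
    calc 2 = 2 ^ 1 := by norm_num
      _ ≤ 2 ^ (k + 1) := Nat.pow_le_pow_right (by norm_num) (by omega)
  have hTT := TT (2 ^ (k + 1)) h2m
  have hlogpow : Real.log ((2 ^ (k + 1) : ℕ) : ℝ) = (k + 1 : ℝ) * Real.log 2 := by
    push_cast
    rw [Real.log_pow]
    push_cast
    ring
  have hDρ : (0:ℝ) ≤ D * ρ ^ k := mul_nonneg (by linarith) (by positivity)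
  calc ∑ n ∈ (Finset.Ico (2 ^ k) (2 ^ (k + 1))).filter Nat.Prime, condBg a n
      ≤ ∑ n ∈ (Finset.Ico (2 ^ k) (2 ^ (k + 1))).filter Nat.Prime,
          (D * ρ ^ k) * ((‖a n‖) ^ 2 / (n : ℝ)) := Finset.sum_le_sum hstep
    _ = (D * ρ ^ k) * ∑ n ∈ (Finset.Ico (2 ^ k) (2 ^ (k + 1))).filter Nat.Prime,
          (‖a n‖) ^ 2 / (n : ℝ) := by rw [Finset.mul_sum]
    _ ≤ (D * ρ ^ k) * ((1 + D) * (Real.log C₀ + (1 + E) * Real.log (2 ^ (k + 1) : ℕ))) := by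
        apply mul_le_mul_of_nonneg_left _ hDρ
        exact le_trans hTsub hTT
    _ ≤ (D * ρ ^ k) * ((1 + D) * (|Real.log C₀| + (1 + E) * Real.log 2 * (k + 1))) := by
        apply mul_le_mul_of_nonneg_left _ hDρ
        apply mul_le_mul_of_nonneg_left _ (by linarith : (0:ℝ) ≤ 1 + D)
        rw [hlogpow]
        have habs := le_abs_self (Real.log C₀)
        have : (1 + E) * ((k + 1 : ℝ) * Real.log 2) = (1 + E) * Real.log 2 * (k + 1) := by ring
        linarith [this]
    _ = (D * (1 + D)) * (|Real.log C₀| + (1 + E) * Real.log 2 * (k + 1)) * ρ ^ k := by ring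

theorem condB_final (a : ℕ → ℂ) (ρ c₁ c₂ : ℝ) (hρ0 : 0 < ρ) (hρ1 : ρ < 1)
    (hc₁ : 0 ≤ c₁) (hc₂ : 0 ≤ c₂)
    (hblock : ∀ k : ℕ, ∑ n ∈ Finset.Ico (2 ^ k) (2 ^ (k + 1)), condBg a n
      ≤ c₁ * (c₂ + (k + 1)) * ρ ^ k) :
    Summable (condBg a) := by
  set hf : ℕ → ℝ := fun k => c₁ * (c₂ + (k + 1)) * ρ ^ k with hfdef
  have hfnonneg : ∀ k, 0 ≤ hf k := by
    intro k
    apply mul_nonneg (mul_nonneg hc₁ (by positivity)) (by positivity)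
  have hgeo : Summable (fun k : ℕ => ρ ^ k) := summable_geometric_of_lt_one hρ0.le hρ1
  have hpowsum : Summable (fun k : ℕ => (k : ℝ) * ρ ^ k) := by
    have h := summable_pow_mul_geometric_of_norm_lt_one (R := ℝ) 1
      (r := ρ) (by rw [Real.norm_eq_abs, abs_of_pos hρ0]; exact hρ1)
    simpa using h
  have hsumhf : Summable hf := by
    have hcomb := (hgeo.mul_left (c₁ * (c₂ + 1))).add (hpowsum.mul_left c₁)
    apply hcomb.congr
    intro k
    simp only [hfdef]
    ring
  have hdecomp : ∀ L : ℕ, ∑ n ∈ Finset.Ico 1 (2 ^ L), condBg a n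
      = ∑ k ∈ Finset.range L, ∑ n ∈ Finset.Ico (2 ^ k) (2 ^ (k + 1)), condBg a n := by
    intro L
    induction L with
    | zero => simp
    | succ L ih =>
      rw [Finset.sum_range_succ, ← ih,
        Finset.sum_Ico_consecutive _ Nat.one_le_two_pow
          (Nat.pow_le_pow_right (by norm_num) (Nat.le_succ L))]
  have hpartial : ∀ N : ℕ, ∑ i ∈ Finset.range N, condBg a i ≤ ∑' k, hf k := by
    intro N
    calc ∑ i ∈ Finset.range N, condBg a i
        ≤ ∑ i ∈ Finset.range (2 ^ N), condBg a i :=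
          Finset.sum_le_sum_of_subset_of_nonneg
            (Finset.range_subset_range.mpr (Nat.lt_two_pow_self (n := N)).le)
            (fun i _ _ => condBg_nonneg a i)
      _ = condBg a 0 + ∑ i ∈ Finset.Ico 1 (2 ^ N), condBg a i := by
          rw [Finset.range_eq_Ico, Finset.sum_eq_sum_Ico_succ_bot (by positivity)]
      _ = ∑ i ∈ Finset.Ico 1 (2 ^ N), condBg a i := by
          simp [condBg, Nat.not_prime_zero]
      _ = ∑ k ∈ Finset.range N, ∑ n ∈ Finset.Ico (2 ^ k) (2 ^ (k + 1)), condBg a n :=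
          hdecomp N
      _ ≤ ∑ k ∈ Finset.range N, hf k := Finset.sum_le_sum (fun k _ => hblock k)
      _ ≤ ∑' k, hf k := Summable.sum_le_tsum _ (fun k _ => hfnonneg k) hsumhf
  exact summable_of_sum_range_le (condBg_nonneg a) hpartial


/-- **Condition (B) implies `∑_p |a(p)|⁴/p² < ∞`.** -/
theorem summable_fourth_power_of_condB (a : ℕ → ℂ)
    (hmul : a 1 = 1 ∧ ∀ m n : ℕ, Nat.Coprime m n → a (m * n) = a m * a n)
    (hB : ∃ C : ℝ, 0 < C ∧ ∃ θ : ℝ, θ < 1 / 2 ∧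
      (∀ p : ℕ, p.Prime → ‖a p‖ ≤ C * (p : ℝ) ^ θ) ∧
      ∀ r : ℝ, ∃ Cr : ℝ, 0 < Cr ∧ ∀ x : ℝ, 2 ≤ x →
        ∏ p ∈ (Finset.Icc 1 ⌊x⌋₊).filter Nat.Prime,
          (1 + (2 : ℝ) ^ r * (‖a p‖) ^ 2 / (p : ℝ))
        ≤ Cr * ∑ n ∈ Finset.Icc 1 ⌊x⌋₊,
          ((ArithmeticFunction.moebius n : ℝ)) ^ 2 * (‖a n‖) ^ 2 *
            ((n.divisors.card : ℝ)) ^ r / (n : ℝ)) :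
    Summable (fun p : Nat.Primes => (‖a p‖) ^ 4 / ((p : ℕ) : ℝ) ^ 2) := by
  obtain ⟨h1, hmulc⟩ := hmul
  obtain ⟨C, hC, θ, hθ, hpt, hcond⟩ := hB
  obtain ⟨C₀, hC₀, hmain0⟩ := hcond 0
  set θ' : ℝ := max θ 0 with hθ'def
  have hθ'0 : 0 ≤ θ' := le_max_right _ _
  have hθ'half : θ' < 1 / 2 := max_lt hθ (by norm_num)
  have hexp : 2 * θ' - 1 < 0 := by linarith
  set D : ℝ := (max C 1) ^ 2 with hDdef
  have hM1 : (1:ℝ) ≤ max C 1 := le_max_right _ _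
  have hD1 : 1 ≤ D := by nlinarith
  set E : ℝ := Real.logb 2 D with hEdef
  have hE0 : 0 ≤ E := Real.logb_nonneg one_lt_two hD1
  -- pointwise bounds at primes
  have hpt2 : ∀ p : ℕ, p.Prime → (‖a p‖) ^ 2 ≤ D * (p : ℝ) ^ (2 * θ') := by
    intro p pp
    have hp2 : (2:ℝ) ≤ p := by exact_mod_cast pp.two_le
    have hp1 : (1:ℝ) ≤ p := by linarith
    have hb : ‖a p‖ ≤ (max C 1) * (p : ℝ) ^ θ' := by
      refine (hpt p pp).trans ?_
      apply mul_le_mul (le_max_left C 1)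
        (Real.rpow_le_rpow_of_exponent_le hp1 (le_max_left θ 0))
        (by positivity) (by linarith)
    have h0 : 0 ≤ ‖a p‖ := norm_nonneg _
    have hsq : (‖a p‖) ^ 2 ≤ ((max C 1) * (p : ℝ) ^ θ') ^ 2 := by
      apply pow_le_pow_left₀ h0 hb
    have hrw : ((max C 1) * (p : ℝ) ^ θ') ^ 2 = D * (p : ℝ) ^ (2 * θ') := by
      have hpe : ((p:ℝ) ^ θ') ^ (2:ℕ) = (p:ℝ) ^ (θ' * 2) := by
        rw [← Real.rpow_natCast ((p:ℝ) ^ θ') 2, ← Real.rpow_mul (by positivity)]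
        norm_num
      rw [mul_pow, hpe, hDdef, mul_comm θ' 2]
    linarith [hsq, hrw.le, hrw.ge]
  have hp_lin : ∀ p : ℕ, p.Prime → (‖a p‖) ^ 2 ≤ D * p := by
    intro p pp
    have hp1 : (1:ℝ) ≤ p := by exact_mod_cast pp.one_lt.le
    refine (hpt2 p pp).trans ?_
    have : (p:ℝ) ^ (2 * θ') ≤ (p:ℝ) ^ (1:ℝ) :=
      Real.rpow_le_rpow_of_exponent_le hp1 (by linarith)
    rw [Real.rpow_one] at this
    have hD0 : (0:ℝ) ≤ D := by linarith
    exact mul_le_mul_of_nonneg_left this hD0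
  have ht_rpow : ∀ p : ℕ, p.Prime →
      (‖a p‖) ^ 2 / (p : ℝ) ≤ D * (p : ℝ) ^ (2 * θ' - 1) := by
    intro p pp
    have hp0 : (0:ℝ) < p := by exact_mod_cast pp.pos
    have hrw : D * (p : ℝ) ^ (2 * θ' - 1) = D * (p : ℝ) ^ (2 * θ') / (p : ℝ) := by
      rw [Real.rpow_sub hp0, Real.rpow_one, mul_div_assoc]
    rw [hrw]
    gcongr
    exact hpt2 p pp
  have htD : ∀ p : ℕ, p.Prime → (‖a p‖) ^ 2 / (p : ℝ) ≤ D := by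
    intro p pp
    have hp0 : (0:ℝ) < p := by exact_mod_cast pp.pos
    rw [div_le_iff₀ hp0]
    exact hp_lin p pp
  -- specialize condition (B) at r = 0 and natural x
  have hmainN : ∀ m : ℕ, 2 ≤ m →
      ∏ p ∈ (Finset.Icc 1 m).filter Nat.Prime, (1 + (‖a p‖) ^ 2 / (p : ℝ))
        ≤ C₀ * ∑ n ∈ Finset.Icc 1 m,
            ((ArithmeticFunction.moebius n : ℝ)) ^ 2 * (‖a n‖) ^ 2 / (n : ℝ) := by
    intro m hm2
    have h := hmain0 (m : ℝ) (by exact_mod_cast hm2)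
    rw [Nat.floor_natCast] at h
    simpa only [Real.rpow_zero, one_mul, mul_one] using h
  have haux := condB_aux_prod a h1 hmulc
  have hterm := condB_aux_prod' a haux D hp_lin
  have hpow : ∀ n : ℕ, Squarefree n → D ^ n.primeFactors.card ≤ (n : ℝ) ^ Real.logb 2 D :=
    fun n hsq => condB_aux_pow D hD1 n hsq
  have TT := condB_T_bound a D hD1 hterm hpow htD C₀ hC₀ hmainN
  set ρ : ℝ := (2:ℝ) ^ (2 * θ' - 1) with hρdef
  have hρ0 : 0 < ρ := Real.rpow_pos_of_pos two_pos _
  have hρ1 : ρ < 1 := Real.rpow_lt_one_of_one_lt_of_neg one_lt_two hexp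
  have hblock := condB_block_bound a D θ' ρ C₀ E hD1 hρdef hexp.le ht_rpow TT
  -- massage the block bound into the shape of condB_final
  have hlog2 : (0:ℝ) < Real.log 2 := Real.log_pos one_lt_two
  have hc : (0:ℝ) < (1 + E) * Real.log 2 := mul_pos (by linarith) hlog2
  set c₁ : ℝ := (D * (1 + D)) * ((1 + E) * Real.log 2) with hc₁def
  set c₂ : ℝ := |Real.log C₀| / ((1 + E) * Real.log 2) with hc₂def
  have hc₁ : 0 ≤ c₁ := le_of_lt (mul_pos (by nlinarith) hc)
  have hc₂ : 0 ≤ c₂ := by positivity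
  have hblock' : ∀ k : ℕ, ∑ n ∈ Finset.Ico (2 ^ k) (2 ^ (k + 1)), condBg a n
      ≤ c₁ * (c₂ + (k + 1)) * ρ ^ k := by
    intro k
    refine (hblock k).trans_eq ?_
    rw [hc₁def, hc₂def]
    field_simp
  have hsg : Summable (condBg a) := condB_final a ρ c₁ c₂ hρ0 hρ1 hc₁ hc₂ hblock'
  have h2 := hsg.comp_injective (Nat.Primes.coe_nat_injective)
  apply h2.congr
  intro p
  simp [condBg, Function.comp, p.2]
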